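/- For every d with 1 ≤ d ≤ r and every λ > 0, the function λ ↦ R_E(d, λ) is differentiable and its derivative satisfies d/dλ R_E(d, λ) = −2 tr(Σ_ε)·tr(V_d' Σ_x V_d D_d^{-2} Φ_d² (Φ_d + λ I_d)^{-3}) + 2λ·tr(β* β*' V_d Φ_d (Φ_d + λ I_d)^{-2} V_d' Σ_x V_d (Φ_d + λ I_d)^{-1} V_d'). -/

import Mathlib

open Matrix
open scoped Kronecker

/-- The vectorization `vec(β)` of a `p × q` matrix, indexed to match `I_q ⊗ A`
(the index `(k, i)` with `k ∈ Fin q`, `i ∈ Fin p` corresponds to entry `β i k`). -/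
def vecM {p q : ℕ} (β : Matrix (Fin p) (Fin q) ℝ) : Fin q × Fin p → ℝ :=
  fun ki => β ki.2 ki.1

/-- EgReg reducible prediction risk
`R_E(d, λ) = tr(Σ_ε)·tr(V_d D_d⁻² Φ_d² (Φ_d + λ I_d)⁻² V_d' Σ_x)
  + λ²·vec(β*)'(I_q ⊗ V_d (Φ_d + λ I_d)⁻¹ V_d' Σ_x V_d (Φ_d + λ I_d)⁻¹ V_d') vec(β*)`. -/
noncomputable def RE {p q d : ℕ}
    (Vd : Matrix (Fin p) (Fin d) ℝ) (Dd Φd : Matrix (Fin d) (Fin d) ℝ)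
    (Sx : Matrix (Fin p) (Fin p) ℝ) (Se : Matrix (Fin q) (Fin q) ℝ)
    (β : Matrix (Fin p) (Fin q) ℝ) (lam : ℝ) : ℝ :=
  Se.trace * (Vd * (Dd ^ 2)⁻¹ * Φd ^ 2 * ((Φd + lam • 1) ^ 2)⁻¹ * Vdᵀ * Sx).trace
  + lam ^ 2 * vecM β ⬝ᵥ (((1 : Matrix (Fin q) (Fin q) ℝ) ⊗ₖ
      (Vd * (Φd + lam • 1)⁻¹ * Vdᵀ * Sx * Vd * (Φd + lam • 1)⁻¹ * Vdᵀ)).mulVec (vecM β))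

/-- NIECE reducible prediction risk
`R_N(u, d) = tr(Σ_ε)·tr(V_u D_u⁻² V_u' Σ_x)
  + vec(β*)'(I_q ⊗ (V_u V_u' − V_d V_d') Σ_x (V_u V_u' − V_d V_d')) vec(β*)`. -/
noncomputable def RN {p q u d : ℕ}
    (Vu : Matrix (Fin p) (Fin u) ℝ) (Du : Matrix (Fin u) (Fin u) ℝ)
    (Vd : Matrix (Fin p) (Fin d) ℝ)
    (Sx : Matrix (Fin p) (Fin p) ℝ) (Se : Matrix (Fin q) (Fin q) ℝ)
    (β : Matrix (Fin p) (Fin q) ℝ) : ℝ :=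
  Se.trace * (Vu * (Du ^ 2)⁻¹ * Vuᵀ * Sx).trace
  + vecM β ⬝ᵥ (((1 : Matrix (Fin q) (Fin q) ℝ) ⊗ₖ
      ((Vu * Vuᵀ - Vd * Vdᵀ) * Sx * (Vu * Vuᵀ - Vd * Vdᵀ))).mulVec (vecM β))

/-- The largest eigenvalue of a square matrix. -/
noncomputable def maxEig {m : ℕ} (A : Matrix (Fin m) (Fin m) ℝ) : ℝ :=
  sSup {t : ℝ | ∃ w : Fin m → ℝ, w ≠ 0 ∧ A.mulVec w = t • w}

section Aux

lemma diagInv {d : ℕ} (v : Fin d → ℝ) (h : ∀ i, v i ≠ 0) :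
    (Matrix.diagonal v)⁻¹ = Matrix.diagonal (fun i => (v i)⁻¹) := by
  apply Matrix.inv_eq_right_inv
  rw [Matrix.diagonal_mul_diagonal]
  convert Matrix.diagonal_one with i
  exact mul_inv_cancel₀ (h i)

lemma diagPowInv {d : ℕ} (v : Fin d → ℝ) (h : ∀ i, v i ≠ 0) (k : ℕ) :
    ((Matrix.diagonal v) ^ k)⁻¹ = Matrix.diagonal (fun i => (v i ^ k)⁻¹) := by
  rw [Matrix.diagonal_pow, diagInv]
  · congr
  · intro i
    simp only [Pi.pow_apply]
    exact pow_ne_zero _ (h i)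

lemma diagAdd {d : ℕ} (v : Fin d → ℝ) (l : ℝ) :
    Matrix.diagonal v + l • (1 : Matrix (Fin d) (Fin d) ℝ)
      = Matrix.diagonal (fun j => v j + l) := by
  rw [Matrix.smul_one_eq_diagonal, Matrix.diagonal_add]

lemma traceVdW {p d : ℕ} (Vd : Matrix (Fin p) (Fin d) ℝ) (Sx : Matrix (Fin p) (Fin p) ℝ)
    (w : Fin d → ℝ) :
    (Vd * Matrix.diagonal w * Vdᵀ * Sx).trace = ∑ j, w j * (Vdᵀ * Sx * Vd) j j := by
  have h1 : Vd * Matrix.diagonal w * Vdᵀ * Sx = (Vd * Matrix.diagonal w) * (Vdᵀ * Sx) := by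
    simp [Matrix.mul_assoc]
  rw [h1, Matrix.trace_mul_comm]
  have h2 : Vdᵀ * Sx * (Vd * Matrix.diagonal w) = (Vdᵀ * Sx * Vd) * Matrix.diagonal w := by
    simp [Matrix.mul_assoc]
  rw [h2]
  simp [Matrix.trace, Matrix.diag, Matrix.mul_diagonal, mul_comm]

lemma traceMD {d : ℕ} (M : Matrix (Fin d) (Fin d) ℝ) (w : Fin d → ℝ) :
    (M * Matrix.diagonal w).trace = ∑ j, M j j * w j := by
  simp [Matrix.trace, Matrix.diag, Matrix.mul_diagonal]

lemma combineDiag3 {p d : ℕ} (Vd : Matrix (Fin p) (Fin d) ℝ) (w1 w2 w3 : Fin d → ℝ) :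
    Vd * Matrix.diagonal w1 * Matrix.diagonal w2 * Matrix.diagonal w3
      = Vd * Matrix.diagonal (fun j => w1 j * (w2 j * w3 j)) := by
  rw [Matrix.mul_assoc (Vd * Matrix.diagonal w1), Matrix.diagonal_mul_diagonal,
    Matrix.mul_assoc, Matrix.diagonal_mul_diagonal]

lemma quadKron {p q : ℕ} (β : Matrix (Fin p) (Fin q) ℝ) (K : Matrix (Fin p) (Fin p) ℝ) :
    vecM β ⬝ᵥ (((1 : Matrix (Fin q) (Fin q) ℝ) ⊗ₖ K).mulVec (vecM β)) = (βᵀ * K * β).trace := by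
  simp only [dotProduct, Matrix.mulVec, Matrix.trace, Matrix.diag, Matrix.mul_apply,
    Matrix.kroneckerMap_apply, vecM, Matrix.one_apply, Fintype.sum_prod_type,
    Matrix.transpose_apply, dotProduct]
  simp only [ite_mul, one_mul, zero_mul, Finset.sum_ite_eq, Finset.mem_univ, if_true]
  refine Finset.sum_congr rfl fun x _ => ?_
  have h : ∀ i : Fin p, (∑ x2 : Fin q, ∑ x3 : Fin p, if x = x2 then K i x3 * β x3 x2 else 0)
      = ∑ x3, K i x3 * β x3 x := by
    intro i; rw [Finset.sum_comm]
    simp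
  simp only [h, Finset.mul_sum, Finset.sum_mul]
  rw [Finset.sum_comm]
  exact Finset.sum_congr rfl fun i _ => Finset.sum_congr rfl fun i' _ => by ring

lemma traceNBMA {d : ℕ} (N M : Matrix (Fin d) (Fin d) ℝ) (b a : Fin d → ℝ) :
    (N * Matrix.diagonal b * M * Matrix.diagonal a).trace
      = ∑ j, ∑ k, N j k * b k * M k j * a j := by
  simp only [Matrix.trace, Matrix.diag, Matrix.mul_apply, Matrix.diagonal_apply, Finset.sum_mul,
    mul_ite, ite_mul, mul_zero, zero_mul, Finset.sum_ite_eq, Finset.sum_ite_eq',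
    Finset.mem_univ, if_true]

lemma quadTrace {p q d : ℕ} (β : Matrix (Fin p) (Fin q) ℝ) (Vd : Matrix (Fin p) (Fin d) ℝ)
    (Sx : Matrix (Fin p) (Fin p) ℝ) (A : Matrix (Fin d) (Fin d) ℝ) :
    (βᵀ * (Vd * A * Vdᵀ * Sx * Vd * A * Vdᵀ) * β).trace
      = ((Vdᵀ * (β * βᵀ) * Vd) * A * (Vdᵀ * Sx * Vd) * A).trace := by
  have h1 : βᵀ * (Vd * A * Vdᵀ * Sx * Vd * A * Vdᵀ) * β
      = (βᵀ * (Vd * A * Vdᵀ * Sx * Vd * A)) * (Vdᵀ * β) := by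
    simp only [Matrix.mul_assoc]
  rw [h1, Matrix.trace_mul_comm]
  congr 1
  simp only [Matrix.mul_assoc]

lemma traceP {p d : ℕ} (P : Matrix (Fin p) (Fin p) ℝ) (Vd : Matrix (Fin p) (Fin d) ℝ)
    (Sx : Matrix (Fin p) (Fin p) ℝ) (B1 B2 A : Matrix (Fin d) (Fin d) ℝ) :
    (P * Vd * B1 * B2 * Vdᵀ * Sx * Vd * A * Vdᵀ).trace
      = ((Vdᵀ * P * Vd) * (B1 * B2) * (Vdᵀ * Sx * Vd) * A).trace := by
  rw [Matrix.trace_mul_comm (P * Vd * B1 * B2 * Vdᵀ * Sx * Vd * A) Vdᵀ]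
  congr 1
  simp only [Matrix.mul_assoc]

lemma deriv1 (c f s lam : ℝ) (hf : 0 < f) (hs : s ≠ 0) (hl : 0 < lam) :
    HasDerivAt (fun l : ℝ => c * (f ^ 2 / (s ^ 2 * (f + l) ^ 2)))
      (-2 * c * (f ^ 2 / (s ^ 2 * (f + lam) ^ 3))) lam := by
  have ha : (0:ℝ) < f + lam := by linarith
  have h1 : HasDerivAt (fun l : ℝ => f + l) 1 lam := (hasDerivAt_id lam).const_add f
  have h2 : HasDerivAt (fun l : ℝ => (f + l) ^ 2) (2 * (f + lam)) lam := by
    simpa using h1.fun_pow 2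
  have h3 : HasDerivAt (fun l : ℝ => ((f + l) ^ 2)⁻¹)
      (-(2 * (f + lam)) / ((f + lam) ^ 2) ^ 2) lam := h2.inv (by positivity)
  have h4 : HasDerivAt (fun y => c * f ^ 2 / s ^ 2 * ((f + y) ^ 2)⁻¹)
      (c * f ^ 2 / s ^ 2 * (-(2 * (f + lam)) / ((f + lam) ^ 2) ^ 2)) lam :=
    h3.const_mul (c * f ^ 2 / s ^ 2)
  convert h4 using 1
  · funext l
    rw [div_eq_mul_inv, mul_inv, div_eq_mul_inv]
    ring
  · field_simp

lemma deriv2 (w fj fk lam : ℝ) (hj : 0 < fj) (hk : 0 < fk) (hl : 0 < lam) :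
    HasDerivAt (fun l : ℝ => w * (l ^ 2 * ((fj + l) * (fk + l))⁻¹))
      (w * (lam * fk / ((fj + lam) * (fk + lam) ^ 2)
        + lam * fj / ((fj + lam) ^ 2 * (fk + lam)))) lam := by
  have haj : (0:ℝ) < fj + lam := by linarith
  have hak : (0:ℝ) < fk + lam := by linarith
  have h1 : HasDerivAt (fun l : ℝ => l ^ 2) (2 * lam) lam := by
    simpa using (hasDerivAt_id lam).fun_pow 2
  have h2 : HasDerivAt (fun l : ℝ => (fj + l) * (fk + l)) ((fk + lam) + (fj + lam)) lam := by
    simpa using ((hasDerivAt_id lam).const_add fj).fun_mul ((hasDerivAt_id lam).const_add fk)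
  have h3 : HasDerivAt (fun y => w * ((fun l : ℝ => l ^ 2) / fun l : ℝ => (fj + l) * (fk + l)) y)
      (w * ((2 * lam * ((fj + lam) * (fk + lam)) - lam ^ 2 * (fk + lam + (fj + lam))) /
        ((fj + lam) * (fk + lam)) ^ 2)) lam :=
    (h1.div h2 (by positivity)).const_mul w
  convert h3 using 1
  · funext l
    simp only [Pi.div_apply, div_eq_mul_inv]
  rw [mul_comm w, mul_comm w]
  congr 1
  field_simp
  ring

lemma RE_eq {p q d : ℕ} (Vd : Matrix (Fin p) (Fin d) ℝ) (fσ fφ : Fin d → ℝ)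
    (Sx : Matrix (Fin p) (Fin p) ℝ) (Se : Matrix (Fin q) (Fin q) ℝ)
    (β : Matrix (Fin p) (Fin q) ℝ)
    (hσ : ∀ j, fσ j ≠ 0) (hφ : ∀ j, 0 < fφ j) (l : ℝ) (hl : 0 < l) :
    RE Vd (Matrix.diagonal fσ) (Matrix.diagonal fφ) Sx Se β l
      = Se.trace * ∑ j, (Vdᵀ * Sx * Vd) j j * (fφ j ^ 2 / (fσ j ^ 2 * (fφ j + l) ^ 2))
        + ∑ j, ∑ k, ((Vdᵀ * (β * βᵀ) * Vd) j k * (Vdᵀ * Sx * Vd) k j)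
            * (l ^ 2 * ((fφ j + l) * (fφ k + l))⁻¹) := by
  have hA : ∀ j, fφ j + l ≠ 0 := fun j => by have := hφ j; positivity
  rw [RE, diagAdd, diagPowInv fσ hσ 2, Matrix.diagonal_pow, diagPowInv _ hA 2, diagInv _ hA]
  congr 1
  · rw [combineDiag3, traceVdW]
    refine congrArg (Se.trace * ·) ?_
    refine Finset.sum_congr rfl fun j _ => ?_
    simp only [Pi.pow_apply]
    rw [div_eq_mul_inv, mul_inv]
    ring
  · rw [quadKron, quadTrace, traceNBMA, Finset.mul_sum]
    refine Finset.sum_congr rfl fun j _ => ?_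
    rw [Finset.mul_sum]
    refine Finset.sum_congr rfl fun k _ => ?_
    rw [mul_inv]
    ring

end Aux

theorem egreg_risk_hasDerivAt
    (n p q r : ℕ) (hr : 0 < r)
    (X : Matrix (Fin n) (Fin p) ℝ)
    (U : Matrix (Fin n) (Fin r) ℝ) (V : Matrix (Fin p) (Fin r) ℝ) (σ : Fin r → ℝ)
    (hrank : X.rank = r)
    (hSVD : X = U * Matrix.diagonal σ * Vᵀ)
    (hU : Uᵀ * U = 1) (hV : Vᵀ * V = 1)
    (hσpos : ∀ j, 0 < σ j) (hσanti : Antitone σ)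
    (π : Equiv.Perm (Fin r)) (φ : Fin r → ℝ)
    (hφpos : ∀ j, 0 < φ j) (hφanti : Antitone φ)
    (Sx : Matrix (Fin p) (Fin p) ℝ) (hSx : Sx.PosDef) (hSxsymm : Sx.IsSymm)
    (Se : Matrix (Fin q) (Fin q) ℝ) (hSe : Se.PosSemidef)
    (β : Matrix (Fin p) (Fin q) ℝ)
    (d : ℕ) (hd1 : 1 ≤ d) (hdr : d ≤ r) (lam : ℝ) (hlam : 0 < lam) :
    HasDerivAt
      (fun l : ℝ =>
        RE (V.submatrix id (fun j : Fin d => π (Fin.castLE hdr j)))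
           (Matrix.diagonal (fun j : Fin d => σ (π (Fin.castLE hdr j))))
           (Matrix.diagonal (fun j : Fin d => φ (Fin.castLE hdr j)))
           Sx Se β l)
      (-2 * Se.trace *
          ((V.submatrix id (fun j : Fin d => π (Fin.castLE hdr j)))ᵀ * Sx *
            (V.submatrix id (fun j : Fin d => π (Fin.castLE hdr j))) *
            ((Matrix.diagonal (fun j : Fin d => σ (π (Fin.castLE hdr j)))) ^ 2)⁻¹ *
            (Matrix.diagonal (fun j : Fin d => φ (Fin.castLE hdr j))) ^ 2 *
            (((Matrix.diagonal (fun j : Fin d => φ (Fin.castLE hdr j))) + lam • 1) ^ 3)⁻¹).trace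
        + 2 * lam *
          (β * βᵀ * (V.submatrix id (fun j : Fin d => π (Fin.castLE hdr j))) *
            (Matrix.diagonal (fun j : Fin d => φ (Fin.castLE hdr j))) *
            (((Matrix.diagonal (fun j : Fin d => φ (Fin.castLE hdr j))) + lam • 1) ^ 2)⁻¹ *
            (V.submatrix id (fun j : Fin d => π (Fin.castLE hdr j)))ᵀ * Sx *
            (V.submatrix id (fun j : Fin d => π (Fin.castLE hdr j))) *
            ((Matrix.diagonal (fun j : Fin d => φ (Fin.castLE hdr j))) + lam • 1)⁻¹ *
            (V.submatrix id (fun j : Fin d => π (Fin.castLE hdr j)))ᵀ).trace)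
      lam := by
  set Vd := V.submatrix id (fun j : Fin d => π (Fin.castLE hdr j)) with hVdDef
  set fσ : Fin d → ℝ := fun j => σ (π (Fin.castLE hdr j)) with hfσDef
  set fφ : Fin d → ℝ := fun j => φ (Fin.castLE hdr j) with hfφDef
  set M := Vdᵀ * Sx * Vd with hMdef
  set N := Vdᵀ * (β * βᵀ) * Vd with hNdef
  have hφ' : ∀ j : Fin d, 0 < fφ j := fun j => hφpos _
  have hσ' : ∀ j : Fin d, fσ j ≠ 0 := fun j => (hσpos _).ne'
  have hA : ∀ j : Fin d, fφ j + lam ≠ 0 := fun j => by have := hφ' j; positivity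
  -- symmetry of M and N
  have hMt : Mᵀ = M := by
    rw [hMdef, Matrix.transpose_mul, Matrix.transpose_mul, Matrix.transpose_transpose,
      hSxsymm.eq, ← Matrix.mul_assoc]
  have hNt : Nᵀ = N := by
    rw [hNdef, Matrix.transpose_mul, Matrix.transpose_mul, Matrix.transpose_transpose,
      Matrix.transpose_mul, Matrix.transpose_transpose, ← Matrix.mul_assoc]
  have hMsym : ∀ j k, M j k = M k j := by
    intro j k
    have h2 := congrFun (congrFun hMt k) j
    simpa using h2
  have hNsym : ∀ j k, N j k = N k j := by
    intro j k
    have h2 := congrFun (congrFun hNt k) j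
    simpa using h2
  -- derivative of the scalar form
  have hD1 : HasDerivAt
      (fun l : ℝ => ∑ j, M j j * (fφ j ^ 2 / (fσ j ^ 2 * (fφ j + l) ^ 2)))
      (∑ j, -2 * M j j * (fφ j ^ 2 / (fσ j ^ 2 * (fφ j + lam) ^ 3))) lam :=
    HasDerivAt.fun_sum fun j _ => deriv1 (M j j) (fφ j) (fσ j) lam (hφ' j) (hσ' j) hlam
  have hD2 : HasDerivAt
      (fun l : ℝ => ∑ j, ∑ k, (N j k * M k j) * (l ^ 2 * ((fφ j + l) * (fφ k + l))⁻¹))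
      (∑ j, ∑ k, (N j k * M k j) * (lam * fφ k / ((fφ j + lam) * (fφ k + lam) ^ 2)
        + lam * fφ j / ((fφ j + lam) ^ 2 * (fφ k + lam)))) lam :=
    HasDerivAt.fun_sum fun j _ => HasDerivAt.fun_sum fun k _ =>
      deriv2 (N j k * M k j) (fφ j) (fφ k) lam (hφ' j) (hφ' k) hlam
  have hF := (hD1.const_mul Se.trace).add hD2
  have hev : (fun l : ℝ => RE Vd (Matrix.diagonal fσ) (Matrix.diagonal fφ) Sx Se β l)
      =ᶠ[nhds lam] (fun l : ℝ =>
        Se.trace * ∑ j, M j j * (fφ j ^ 2 / (fσ j ^ 2 * (fφ j + l) ^ 2))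
        + ∑ j, ∑ k, (N j k * M k j) * (l ^ 2 * ((fφ j + l) * (fφ k + l))⁻¹)) := by
    filter_upwards [Ioi_mem_nhds hlam] with l hl
    exact RE_eq Vd fσ fφ Sx Se β hσ' hφ' l hl
  have hmain := hF.congr_of_eventuallyEq hev
  -- identify the derivative value
  have hde : -2 * Se.trace *
        (M * ((Matrix.diagonal fσ) ^ 2)⁻¹ * (Matrix.diagonal fφ) ^ 2 *
          ((Matrix.diagonal fφ + lam • 1) ^ 3)⁻¹).trace
      + 2 * lam *
        (β * βᵀ * Vd * (Matrix.diagonal fφ) * ((Matrix.diagonal fφ + lam • 1) ^ 2)⁻¹ *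
          Vdᵀ * Sx * Vd * (Matrix.diagonal fφ + lam • 1)⁻¹ * Vdᵀ).trace
      = Se.trace * ∑ j, -2 * M j j * (fφ j ^ 2 / (fσ j ^ 2 * (fφ j + lam) ^ 3))
        + ∑ j, ∑ k, (N j k * M k j) * (lam * fφ k / ((fφ j + lam) * (fφ k + lam) ^ 2)
            + lam * fφ j / ((fφ j + lam) ^ 2 * (fφ k + lam))) := by
    rw [diagAdd, diagPowInv fσ hσ' 2, Matrix.diagonal_pow, diagPowInv _ hA 3, diagPowInv _ hA 2,
      diagInv _ hA]
    congr 1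
    · -- first term
      rw [combineDiag3 M _ _ _, traceMD, Finset.mul_sum, Finset.mul_sum]
      refine Finset.sum_congr rfl fun j _ => ?_
      simp only [Pi.pow_apply]
      rw [div_eq_mul_inv, mul_inv]
      ring
    · -- second term
      rw [traceP, Matrix.diagonal_mul_diagonal, ← hNdef, ← hMdef, traceNBMA]
      have e1 : (∑ j, ∑ k, (N j k * M k j) *
            (lam * fφ j / ((fφ j + lam) ^ 2 * (fφ k + lam))))
          = ∑ j, ∑ k, (N j k * M k j) *
            (lam * fφ k / ((fφ k + lam) ^ 2 * (fφ j + lam))) := by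
        rw [Finset.sum_comm]
        exact Finset.sum_congr rfl fun j _ => Finset.sum_congr rfl fun k _ => by
          rw [hNsym k j, hMsym j k]
      trans ((∑ j, ∑ k, (N j k * M k j) * (lam * fφ k / ((fφ j + lam) * (fφ k + lam) ^ 2)))
          + ∑ j, ∑ k, (N j k * M k j) * (lam * fφ j / ((fφ j + lam) ^ 2 * (fφ k + lam))))
      · rw [e1, ← Finset.sum_add_distrib]
        simp only [← Finset.sum_add_distrib, Finset.mul_sum]
        refine Finset.sum_congr rfl fun j _ => Finset.sum_congr rfl fun k _ => ?_
        have h1 := hA j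
        have h2 := hA k
        field_simp
        ring
      · rw [← Finset.sum_add_distrib]
        refine Finset.sum_congr rfl fun j _ => ?_
        rw [← Finset.sum_add_distrib]
        exact Finset.sum_congr rfl fun k _ => (mul_add _ _ _).symm
  rw [hde]
  exact hmain
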